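/- For n, m ≥ 3 with n > m−2, r(K_{1,n}, K_{1,m}+e) = 2n+1. -/

import Mathlib

open SimpleGraph

/-- `Contains G H` : the graph `G` contains a copy of `H`. -/
def Contains {V W : Type*} (G : SimpleGraph V) (H : SimpleGraph W) : Prop :=
  ∃ f : W → V, Function.Injective f ∧ ∀ a b, H.Adj a b → G.Adj (f a) (f b)

/-- The star `K_{1,n}` on `n+1` vertices: vertex `0` is joined to all others. -/
def starG (n : ℕ) : SimpleGraph (Fin (n + 1)) :=
  SimpleGraph.fromRel (fun a _ => a = 0)

/-- `K_{1,m}+e` on `m+1` vertices: vertex `0` joined to all others, plus the edge `{1,2}`. -/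
def starPlusE (m : ℕ) : SimpleGraph (Fin (m + 1)) :=
  SimpleGraph.fromRel (fun a b => a = 0 ∨ (a = 1 ∧ b = 2))

lemma contains_star {N n : ℕ} (R : SimpleGraph (Fin N)) [DecidableRel R.Adj] (v : Fin N)
    (hdeg : n ≤ R.degree v) : Contains R (starG n) := by
  obtain ⟨s, hs_sub, hs_card⟩ := Finset.exists_subset_card_eq (s := R.neighborFinset v) (n := n) hdeg
  set e := s.orderIsoOfFin hs_card with he
  have hmem : ∀ i : Fin n, R.Adj v (e i) := fun i =>
    (mem_neighborFinset R v _).mp (hs_sub (e i).2)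
  refine ⟨Fin.cases v (fun i => (e i : Fin N)), ?_, ?_⟩
  · intro a b hab
    induction a using Fin.cases with
    | zero =>
      induction b using Fin.cases with
      | zero => rfl
      | succ j => simp only [Fin.cases_zero, Fin.cases_succ] at hab
                  exact absurd hab.symm (hmem j).ne'
    | succ i =>
      induction b using Fin.cases with
      | zero => simp only [Fin.cases_zero, Fin.cases_succ] at hab
                exact absurd hab (hmem i).ne'
      | succ j =>
        simp only [Fin.cases_succ] at hab
        have := e.injective (Subtype.ext hab)
        rw [this]
  · intro a b hab
    rw [starG, fromRel_adj] at hab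
    obtain ⟨hne, h0⟩ := hab
    rcases h0 with h0 | h0
    · subst h0
      obtain ⟨j, rfl⟩ := Fin.eq_succ_of_ne_zero (Ne.symm hne)
      simpa using hmem j
    · subst h0
      obtain ⟨j, rfl⟩ := Fin.eq_succ_of_ne_zero hne
      simpa using (hmem j).symm

lemma contains_starPlusE {N m : ℕ} (hm : 3 ≤ m) (R : SimpleGraph (Fin N))
    [DecidableRel R.Adj] (u v w : Fin N)
    (huv : R.Adj u v) (huw : R.Adj u w) (hvw : R.Adj v w)
    (s : Finset (Fin N)) (hs_sub : s ⊆ R.neighborFinset u) (hs_card : s.card = m - 2)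
    (hvs : v ∉ s) (hws : w ∉ s) : Contains R (starPlusE m) := by
  set e := s.orderIsoOfFin hs_card with he
  have hmem : ∀ i : Fin (m-2), R.Adj u (e i) := fun i =>
    (mem_neighborFinset R u _).mp (hs_sub (e i).2)
  have hus : u ∉ s := fun h => R.notMem_neighborFinset_self u (hs_sub h)
  have hne_u : ∀ i, (e i : Fin N) ≠ u := fun i h => hus (h ▸ (e i).2)
  have hne_v : ∀ i, (e i : Fin N) ≠ v := fun i h => hvs (h ▸ (e i).2)
  have hne_w : ∀ i, (e i : Fin N) ≠ w := fun i h => hws (h ▸ (e i).2)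
  set f : Fin (m+1) → Fin N := fun i =>
    if h0 : (i : ℕ) = 0 then u else if h1 : (i : ℕ) = 1 then v
    else if h2 : (i : ℕ) = 2 then w
    else e ⟨(i : ℕ) - 3, by have := i.isLt; omega⟩ with hf
  refine ⟨f, ?_, ?_⟩
  · intro a b hab
    simp only [hf] at hab
    split_ifs at hab with h1 h2 h3 h4 h5 h6 h7 h8 h9 h10 h11 h12 h13 h14 h15 h16 <;>
      first
        | (exact Fin.ext (by omega))
        | (exact absurd hab huv.ne)
        | (exact absurd hab.symm huv.ne)
        | (exact absurd hab huw.ne)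
        | (exact absurd hab.symm huw.ne)
        | (exact absurd hab hvw.ne)
        | (exact absurd hab.symm hvw.ne)
        | (exact absurd hab.symm (hne_u _))
        | (exact absurd hab (hne_u _))
        | (exact absurd hab.symm (hne_v _))
        | (exact absurd hab (hne_v _))
        | (exact absurd hab.symm (hne_w _))
        | (exact absurd hab (hne_w _))
        | (have h' : ((a:ℕ) - 3 : ℕ) = (b:ℕ) - 3 :=
             congrArg Fin.val (e.injective (Subtype.ext hab))
           exact Fin.ext (by omega))
  · have hval1 : ((1 : Fin (m+1)) : ℕ) = 1 := by
      have h : ((1 : Fin (m+1)) : ℕ) = 1 % (m+1) := rfl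
      rw [h]; exact Nat.mod_eq_of_lt (by omega)
    have hval2 : ((2 : Fin (m+1)) : ℕ) = 2 := by
      have h : ((2 : Fin (m+1)) : ℕ) = 2 % (m+1) := rfl
      rw [h]; exact Nat.mod_eq_of_lt (by omega)
    have hfu : ∀ i : Fin (m+1), (i : ℕ) ≠ 0 → R.Adj u (f i) := by
      intro i hi
      simp only [hf]
      split_ifs with h0 h1 h2
      · exact absurd h0 hi
      · exact huv
      · exact huw
      · exact hmem _
    have hf0 : f 0 = u := by simp [hf]
    have hf1 : f 1 = v := by simp only [hf, hval1]; norm_num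
    have hf2 : f 2 = w := by simp only [hf, hval2]; norm_num
    intro a b hab
    rw [starPlusE, fromRel_adj] at hab
    obtain ⟨hne, hc⟩ := hab
    have hvne : (a : ℕ) ≠ (b : ℕ) := fun h => hne (Fin.ext h)
    rcases hc with (rfl | ⟨rfl, rfl⟩) | (rfl | ⟨rfl, rfl⟩)
    · exact hf0 ▸ hfu b (by simpa using hvne.symm)
    · rw [hf1, hf2]; exact hvw
    · exact hf0 ▸ (hfu a (by simpa using hvne)).symm
    · rw [hf1, hf2]; exact hvw.symm

theorem stmt_9 (n m : ℕ) (hn : 3 ≤ n) (hm : 3 ≤ m) (hmn : m < n + 2) :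
    IsLeast {N : ℕ | ∀ R : SimpleGraph (Fin N),
      Contains R (starG n) ∨ Contains Rᶜ (starPlusE m)} (2 * n + 1) := by
  constructor
  · intro R
    classical
    by_cases hred : Contains R (starG n)
    · exact Or.inl hred
    right
    have hdeg : ∀ v, R.degree v < n := by
      intro v
      by_contra h
      push_neg at h
      exact hred (contains_star R v h)
    have hcardV : Fintype.card (Fin (2*n+1)) = 2*n+1 := by simp
    have hdegc : ∀ v, n + 1 ≤ Rᶜ.degree v := by
      intro v
      have h := R.degree_compl (v := v)
      rw [hcardV] at h
      have := hdeg v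
      omega
    obtain ⟨v, huv⟩ : ∃ v, Rᶜ.Adj (0 : Fin (2*n+1)) v := by
      rw [← degree_pos_iff_exists_adj]
      have := hdegc 0
      omega
    set u : Fin (2*n+1) := 0 with hu
    obtain ⟨w, hw⟩ : ((Rᶜ.neighborFinset u) ∩ (Rᶜ.neighborFinset v)).Nonempty := by
      rw [← Finset.card_pos]
      have hU : ((Rᶜ.neighborFinset u) ∪ (Rᶜ.neighborFinset v)).card ≤ 2*n+1 := by
        have := Finset.card_le_univ ((Rᶜ.neighborFinset u) ∪ (Rᶜ.neighborFinset v))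
        simpa using this
      have hie := Finset.card_union_add_card_inter (Rᶜ.neighborFinset u) (Rᶜ.neighborFinset v)
      have h1 : n + 1 ≤ (Rᶜ.neighborFinset u).card := hdegc u
      have h2 : n + 1 ≤ (Rᶜ.neighborFinset v).card := hdegc v
      omega
    rw [Finset.mem_inter, mem_neighborFinset, mem_neighborFinset] at hw
    obtain ⟨huw, hvw⟩ := hw
    have htcard : m - 2 ≤ (((Rᶜ.neighborFinset u).erase v).erase w).card := by
      have e1 := Finset.pred_card_le_card_erase (s := (Rᶜ.neighborFinset u).erase v) (a := w)
      have e2 := Finset.pred_card_le_card_erase (s := Rᶜ.neighborFinset u) (a := v)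
      have h1 : n + 1 ≤ (Rᶜ.neighborFinset u).card := hdegc u
      omega
    obtain ⟨s, hst, hscard⟩ := Finset.exists_subset_card_eq htcard
    have hsub : s ⊆ Rᶜ.neighborFinset u := by
      intro x hx
      exact Finset.mem_of_mem_erase (Finset.mem_of_mem_erase (hst hx))
    have hvs : v ∉ s := fun h => (Finset.notMem_erase v _) (Finset.mem_of_mem_erase (hst h))
    have hws : w ∉ s := fun h => (Finset.notMem_erase w _) (hst h)
    exact contains_starPlusE hm Rᶜ u v w huv huw hvw s hsub hscard hvs hws
  · intro N hN
    by_contra hlt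
    push_neg at hlt
    classical
    set G : SimpleGraph (Fin N) :=
      SimpleGraph.fromRel (fun i j => ((i:ℕ) < n ↔ (j:ℕ) < n)) with hG
    rcases hN G with ⟨f, hinj, hadj⟩ | ⟨f, hinj, hadj⟩
    · have hside : ∀ k : Fin (n+1), (((f k : Fin N) : ℕ) < n ↔ ((f 0 : Fin N) : ℕ) < n) := by
        intro k
        by_cases hk : k = 0
        · subst hk; exact Iff.rfl
        · have hst : (starG n).Adj 0 k := by
            rw [starG, fromRel_adj]
            exact ⟨Ne.symm hk, Or.inl rfl⟩
          have h2 := hadj _ _ hst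
          rw [hG, fromRel_adj] at h2
          rcases h2.2 with h | h
          · exact h.symm
          · exact h
      set S := Finset.univ.filter
        (fun x : Fin N => ((x:ℕ) < n ↔ ((f 0 : Fin N) : ℕ) < n)) with hS
      have hsub : Finset.univ.image f ⊆ S := by
        intro x hx
        rw [Finset.mem_image] at hx
        obtain ⟨k, _, rfl⟩ := hx
        rw [hS, Finset.mem_filter]
        exact ⟨Finset.mem_univ _, hside k⟩
      have hcard1 : (Finset.univ.image f).card = n + 1 := by
        rw [Finset.card_image_of_injective _ hinj]
        simp
      have hSle : S.card ≤ n := by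
        by_cases h0 : ((f 0 : Fin N) : ℕ) < n
        · have : S.card ≤ (Finset.range n).card := by
            refine Finset.card_le_card_of_injOn (fun x : Fin N => (x:ℕ)) ?_ ?_
            · intro x hx
              rw [Finset.mem_coe, hS, Finset.mem_filter] at hx
              rw [Finset.mem_coe, Finset.mem_range]
              exact hx.2.mpr h0
            · intro x _ y _ h
              exact Fin.ext h
          simpa using this
        · have h1 : S.card ≤ (Finset.range (N - n)).card := by
            refine Finset.card_le_card_of_injOn (fun x : Fin N => (x:ℕ) - n) ?_ ?_
            · intro x hx
              rw [Finset.mem_coe, hS, Finset.mem_filter] at hx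
              rw [Finset.mem_coe, Finset.mem_range]
              have hxn : ¬ ((x:ℕ) < n) := fun h => h0 (hx.2.mp h)
              have := x.isLt
              show (x:ℕ) - n < N - n
              omega
            · intro x hx y hy h
              simp only [Finset.mem_coe, hS, Finset.mem_filter] at hx hy
              have hxn : ¬ ((x:ℕ) < n) := fun hh => h0 (hx.2.mp hh)
              have hyn : ¬ ((y:ℕ) < n) := fun hh => h0 (hy.2.mp hh)
              simp only at h
              exact Fin.ext (by omega)
          rw [Finset.card_range] at h1
          omega
      have := Finset.card_le_card hsub
      omega
    · have hval1 : ((1 : Fin (m+1)) : ℕ) = 1 := by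
        have h : ((1 : Fin (m+1)) : ℕ) = 1 % (m+1) := rfl
        rw [h]; exact Nat.mod_eq_of_lt (by omega)
      have hval2 : ((2 : Fin (m+1)) : ℕ) = 2 := by
        have h : ((2 : Fin (m+1)) : ℕ) = 2 % (m+1) := rfl
        rw [h]; exact Nat.mod_eq_of_lt (by omega)
      have h01 : (starPlusE m).Adj 0 1 := by
        rw [starPlusE, fromRel_adj]
        refine ⟨fun h => ?_, Or.inl (Or.inl rfl)⟩
        have h' := congrArg Fin.val h
        rw [Fin.val_zero, hval1] at h'
        omega
      have h02 : (starPlusE m).Adj 0 2 := by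
        rw [starPlusE, fromRel_adj]
        refine ⟨fun h => ?_, Or.inl (Or.inl rfl)⟩
        have h' := congrArg Fin.val h
        rw [Fin.val_zero, hval2] at h'
        omega
      have h12 : (starPlusE m).Adj 1 2 := by
        rw [starPlusE, fromRel_adj]
        refine ⟨fun h => ?_, Or.inl (Or.inr ⟨rfl, rfl⟩)⟩
        have h' := congrArg Fin.val h
        rw [hval1, hval2] at h'
        omega
      have key : ∀ a b : Fin (m+1), (starPlusE m).Adj a b →
          ¬ (((f a : Fin N) : ℕ) < n ↔ ((f b : Fin N) : ℕ) < n) := by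
        intro a b hab
        have h2 := hadj _ _ hab
        rw [compl_adj, hG, fromRel_adj] at h2
        intro hiff
        exact h2.2 ⟨h2.1, Or.inl hiff⟩
      have k01 := key _ _ h01
      have k02 := key _ _ h02
      have k12 := key _ _ h12
      tauto
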